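/- Let T be the N×N nilpotent left-shift matrix with T e_{j+1} = e_j. The matrix M = i t (T† ⊗ |+⟩⟨+| − T ⊗ |−⟩⟨−|) on ℂ^N ⊗ ℂ², where |±⟩ = (e₁ ± e₂)/√2 and t ≠ 0, is nilpotent with exactly two Jordan blocks, each of size N; in particular M^N = 0 and M^{N−1} ≠ 0. -/

import Mathlib

open scoped ComplexOrder
open Matrix Kronecker


lemma shift_pow {N : ℕ} (T : Matrix (Fin N) (Fin N) ℂ)
    (hT : ∀ i j, T i j = if (i : ℕ) + 1 = (j : ℕ) then 1 else 0) (k : ℕ) (i j : Fin N) :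
    (T ^ k) i j = if (i : ℕ) + k = (j : ℕ) then 1 else 0 := by
  induction k generalizing i j with
  | zero =>
    simp only [pow_zero, Matrix.one_apply, Nat.add_zero]
    simp [Fin.ext_iff]
  | succ k ih =>
    rw [pow_succ, Matrix.mul_apply]
    simp only [ih, hT]
    by_cases h : (i : ℕ) + k < N
    · rw [Finset.sum_eq_single (⟨(i : ℕ) + k, h⟩ : Fin N)]
      · simp [← add_assoc]
      · intro b _ hb
        rw [if_neg, zero_mul]
        intro hc; exact hb (by ext; simp [← hc])
      · simp
    · rw [Finset.sum_eq_zero, if_neg]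
      · have := j.isLt; omega
      · intro b _
        rw [if_neg, zero_mul]
        have := b.isLt; omega

lemma kron_conjT {l m n p : Type*} (A : Matrix l m ℂ) (B : Matrix n p ℂ) :
    (A ⊗ₖ B)ᴴ = Aᴴ ⊗ₖ Bᴴ := by
  ext i j
  simp [Matrix.conjTranspose_apply, Matrix.kroneckerMap_apply, mul_comm]

noncomputable def Pp : Matrix (Fin 2) (Fin 2) ℂ := ((1 : ℂ)/2) • !![1, 1; 1, 1]
noncomputable def Qm : Matrix (Fin 2) (Fin 2) ℂ := ((1 : ℂ)/2) • !![1, -1; -1, 1]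
def Hd : Matrix (Fin 2) (Fin 2) ℂ := !![1, 1; 1, -1]
def E1 : Matrix (Fin 2) (Fin 2) ℂ := !![1, 0; 0, 0]
def E2 : Matrix (Fin 2) (Fin 2) ℂ := !![0, 0; 0, 1]

lemma two_mat (A B : Matrix (Fin 2) (Fin 2) ℂ) (h00 : A 0 0 = B 0 0) (h01 : A 0 1 = B 0 1)
    (h10 : A 1 0 = B 1 0) (h11 : A 1 1 = B 1 1) : A = B := by
  ext i j; fin_cases i <;> fin_cases j <;> assumption

lemma hPP : Pp * Pp = Pp := by
  apply two_mat <;> simp [Pp, Matrix.mul_apply, Fin.sum_univ_two] <;> norm_num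
lemma hQQ : Qm * Qm = Qm := by
  apply two_mat <;> simp [Qm, Matrix.mul_apply, Fin.sum_univ_two] <;> norm_num
lemma hPQ : Pp * Qm = 0 := by
  apply two_mat <;> simp [Pp, Qm, Matrix.mul_apply, Fin.sum_univ_two] <;> norm_num
lemma hQP : Qm * Pp = 0 := by
  apply two_mat <;> simp [Pp, Qm, Matrix.mul_apply, Fin.sum_univ_two] <;> norm_num
lemma hPQ1 : Pp + Qm = 1 := by
  apply two_mat <;> simp [Pp, Qm, Matrix.one_apply] <;> norm_num
lemma hHH : Hd * Hd = (2 : ℂ) • 1 := by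
  apply two_mat <;> simp [Hd, Matrix.mul_apply, Fin.sum_univ_two, Matrix.one_apply] <;> norm_num
lemma hHPH : Hd * Pp * Hd = (2 : ℂ) • E1 := by
  apply two_mat <;> simp [Hd, Pp, E1, Matrix.mul_apply, Fin.sum_univ_two] <;> norm_num
lemma hHQH : Hd * Qm * Hd = (2 : ℂ) • E2 := by
  apply two_mat <;> simp [Hd, Qm, E2, Matrix.mul_apply, Fin.sum_univ_two] <;> norm_num
lemma hE11 : E1 * E1 = E1 := by
  apply two_mat <;> simp [E1, Matrix.mul_apply, Fin.sum_univ_two]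
lemma hE12 : E1 * E2 = 0 := by
  apply two_mat <;> simp [E1, E2, Matrix.mul_apply, Fin.sum_univ_two]
lemma hE21 : E2 * E1 = 0 := by
  apply two_mat <;> simp [E1, E2, Matrix.mul_apply, Fin.sum_univ_two]
lemma hE22 : E2 * E2 = E2 := by
  apply two_mat <;> simp [E2, Matrix.mul_apply, Fin.sum_univ_two]
lemma hE1d : E1 = Matrix.diagonal ![1, 0] := by
  apply two_mat <;> simp [E1, Matrix.diagonal]
lemma hE2d : E2 = Matrix.diagonal ![0, 1] := by
  apply two_mat <;> simp [E2, Matrix.diagonal]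
lemma hE1H : E1ᴴ = E1 := by
  apply two_mat <;> simp [E1, Matrix.conjTranspose_apply]
lemma hE2H : E2ᴴ = E2 := by
  apply two_mat <;> simp [E2, Matrix.conjTranspose_apply]

lemma pow_formula {N : ℕ} (c : ℂ) (T : Matrix (Fin N) (Fin N) ℂ) (k : ℕ) :
    (c • (Tᴴ ⊗ₖ Pp - T ⊗ₖ Qm)) ^ k
      = c ^ k • ((Tᴴ ^ k) ⊗ₖ Pp + ((-1 : ℂ)) ^ k • ((T ^ k) ⊗ₖ Qm)) := by
  induction k with
  | zero =>
    simp only [pow_zero, one_smul]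
    rw [← Matrix.kronecker_add, hPQ1, Matrix.one_kronecker_one]
  | succ k ih =>
    rw [pow_succ, ih, Matrix.smul_mul, Matrix.mul_smul, smul_smul, ← pow_succ]
    congr 1
    rw [add_mul, Matrix.smul_mul, mul_sub, mul_sub,
      ← Matrix.mul_kronecker_mul, ← Matrix.mul_kronecker_mul,
      ← Matrix.mul_kronecker_mul, ← Matrix.mul_kronecker_mul,
      hPP, hPQ, hQP, hQQ, Matrix.kronecker_zero, Matrix.kronecker_zero,
      ← pow_succ, ← pow_succ]
    rw [sub_zero, zero_sub, smul_neg, _root_.pow_succ (-1 : ℂ), mul_smul]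
    simp [neg_smul]

lemma hTcT {N : ℕ} (T : Matrix (Fin N) (Fin N) ℂ)
    (hT : ∀ i j, T i j = if (i : ℕ) + 1 = (j : ℕ) then 1 else 0) :
    Tᴴ * T = Matrix.diagonal (fun i : Fin N => if 1 ≤ (i : ℕ) then (1 : ℂ) else 0) := by
  ext i j
  rw [Matrix.mul_apply]
  simp only [Matrix.conjTranspose_apply, hT, apply_ite (star : ℂ → ℂ), star_one, star_zero]
  by_cases h : 1 ≤ (i : ℕ)
  · have h' : (i : ℕ) - 1 < N := by have := i.isLt; omega
    rw [Finset.sum_eq_single (⟨(i : ℕ) - 1, h'⟩ : Fin N)]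
    · have h1 : (i : ℕ) - 1 + 1 = (i : ℕ) := by omega
      rw [Matrix.diagonal_apply, Fin.val_mk, h1, if_pos rfl, one_mul]
      by_cases hij : i = j
      · subst hij; simp [h]
      · rw [if_neg hij, if_neg]
        simp only [Fin.ext_iff, ne_eq] at hij
        omega
    · intro b _ hb
      rw [if_neg, zero_mul]
      intro hc
      exact hb (by ext; simp only [Fin.val_mk]; omega)
    · simp
  · rw [Finset.sum_eq_zero, Matrix.diagonal_apply]
    · by_cases hij : i = j
      · subst hij; simp [h]
      · rw [if_neg hij]
    · intro b _
      rw [if_neg, zero_mul]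
      omega

lemma hTTc {N : ℕ} (T : Matrix (Fin N) (Fin N) ℂ)
    (hT : ∀ i j, T i j = if (i : ℕ) + 1 = (j : ℕ) then 1 else 0) :
    T * Tᴴ = Matrix.diagonal (fun i : Fin N => if (i : ℕ) + 1 < N then (1 : ℂ) else 0) := by
  ext i j
  rw [Matrix.mul_apply]
  simp only [Matrix.conjTranspose_apply, hT, apply_ite (star : ℂ → ℂ), star_one, star_zero]
  by_cases h : (i : ℕ) + 1 < N
  · rw [Finset.sum_eq_single (⟨(i : ℕ) + 1, h⟩ : Fin N)]
    · simp only [Fin.val_mk]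
      rw [if_pos trivial, one_mul, Matrix.diagonal_apply]
      by_cases hij : i = j
      · subst hij; simp [h]
      · rw [if_neg hij, if_neg]
        simp only [Fin.ext_iff, ne_eq] at hij
        omega
    · intro b _ hb
      rw [if_neg, zero_mul]
      intro hc
      exact hb (by ext; simp only [Fin.val_mk]; omega)
    · simp
  · rw [Finset.sum_eq_zero, Matrix.diagonal_apply]
    · by_cases hij : i = j
      · subst hij; simp [h]
      · rw [if_neg hij]
    · intro b _
      rw [if_neg, zero_mul]
      have := b.isLt; omega

/-- The effective single-particle Hamiltonian of the open bosonic Kitaev chain at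
`t = Δ`, `M = i t (Tᴴ ⊗ |+⟩⟨+| − T ⊗ |−⟩⟨−|)`, is nilpotent with exactly two Jordan
blocks of size `N` each: `M^N = 0`, `M^(N−1) ≠ 0`, and `rank M = 2N − 2`. -/
theorem open_bkc_jordan_structure
    (N : ℕ) (hN : 0 < N) (t : ℝ) (ht : t ≠ 0)
    (T : Matrix (Fin N) (Fin N) ℂ)
    (hT : ∀ i j, T i j = if (i : ℕ) + 1 = (j : ℕ) then 1 else 0)
    (M : Matrix (Fin N × Fin 2) (Fin N × Fin 2) ℂ)
    (hM : M = (Complex.I * t) •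
      (Tᴴ ⊗ₖ (((1 : ℂ)/2) • !![1, 1; 1, 1]) - T ⊗ₖ (((1 : ℂ)/2) • !![1, -1; -1, 1]))) :
    M ^ N = 0 ∧ M ^ (N - 1) ≠ 0 ∧ M.rank = 2 * N - 2 := by
  have hM' : M = (Complex.I * t) • (Tᴴ ⊗ₖ Pp - T ⊗ₖ Qm) := hM
  have hc : (Complex.I * (t : ℂ)) ≠ 0 :=
    mul_ne_zero Complex.I_ne_zero (Complex.ofReal_ne_zero.mpr ht)
  have hTN : T ^ N = 0 := by
    ext i j
    rw [shift_pow T hT, Matrix.zero_apply, if_neg]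
    have := j.isLt; omega
  have hTHN : Tᴴ ^ N = 0 := by
    rw [← Matrix.conjTranspose_pow, hTN, Matrix.conjTranspose_zero]
  refine ⟨?_, ?_, ?_⟩
  · rw [hM', pow_formula, hTN, hTHN, Matrix.zero_kronecker, Matrix.zero_kronecker,
      smul_zero, add_zero, smul_zero]
  · intro h
    by_cases h1 : N = 1
    · subst h1
      rw [Nat.sub_self, pow_zero] at h
      have := congrFun (congrFun h ((⟨0, hN⟩ : Fin 1), 0)) ((⟨0, hN⟩ : Fin 1), 0)
      rw [Matrix.one_apply_eq, Matrix.zero_apply] at this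
      exact one_ne_zero this
    · have h2 : 2 ≤ N := by omega
      set i0 : Fin N := ⟨N - 1, by omega⟩ with hi0
      set j0 : Fin N := ⟨0, hN⟩ with hj0
      rw [hM', pow_formula] at h
      have hent := congrFun (congrFun h (i0, 0)) (j0, 0)
      have hTk1 : (Tᴴ ^ (N - 1)) i0 j0 = 1 := by
        rw [← Matrix.conjTranspose_pow, Matrix.conjTranspose_apply, shift_pow T hT]
        simp [hi0, hj0]
      have hTk2 : (T ^ (N - 1)) i0 j0 = 0 := by
        rw [shift_pow T hT, if_neg]
        simp only [hi0, hj0, Fin.val_mk]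
        omega
      rw [Matrix.smul_apply, Matrix.add_apply, Matrix.smul_apply,
        Matrix.kroneckerMap_apply, Matrix.kroneckerMap_apply, hTk1, hTk2,
        Matrix.zero_apply] at hent
      simp only [Pp, Matrix.smul_apply, Matrix.cons_val', Matrix.cons_val_zero,
        Matrix.empty_val', Matrix.cons_val_fin_one, smul_eq_mul, zero_mul, smul_zero,
        add_zero, one_mul] at hent
      have hpow := pow_ne_zero (N - 1) hc
      field_simp at hent
      simp only [Matrix.of_apply, Matrix.cons_val', Matrix.cons_val_zero, Matrix.empty_val',
        Matrix.cons_val_fin_one, mul_zero, add_zero, mul_one] at hent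
      exact hpow hent
  · set W : Matrix (Fin N × Fin 2) (Fin N × Fin 2) ℂ :=
      (1 : Matrix (Fin N) (Fin N) ℂ) ⊗ₖ Hd with hW
    have hWW : W * W = (2 : ℂ) • 1 := by
      rw [hW, ← Matrix.mul_kronecker_mul, one_mul, hHH, Matrix.kronecker_smul,
        Matrix.one_kronecker_one]
    have hInv : Invertible W := by
      refine ⟨(2 : ℂ)⁻¹ • W, ?_, ?_⟩
      · rw [Matrix.smul_mul, hWW, smul_smul]; norm_num
      · rw [Matrix.mul_smul, hWW, smul_smul]; norm_num
    have hdet : IsUnit W.det := Matrix.isUnit_det_of_invertible W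
    have hWMW : W * M * W
        = ((2 : ℂ) * (Complex.I * t)) • (Tᴴ ⊗ₖ E1 - T ⊗ₖ E2) := by
      rw [hM', Matrix.mul_smul, Matrix.smul_mul, hW, mul_sub, sub_mul,
        ← Matrix.mul_kronecker_mul, ← Matrix.mul_kronecker_mul,
        ← Matrix.mul_kronecker_mul, ← Matrix.mul_kronecker_mul,
        one_mul, mul_one, one_mul, mul_one, hHPH, hHQH,
        Matrix.kronecker_smul, Matrix.kronecker_smul, ← smul_sub, smul_smul]
      congr 1
      ring
    have hr1 : M.rank = (Tᴴ ⊗ₖ E1 - T ⊗ₖ E2).rank := by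
      have e1 : (W * M * W).rank = M.rank := by
        rw [Matrix.rank_mul_eq_left_of_isUnit_det W (W * M) hdet,
          Matrix.rank_mul_eq_right_of_isUnit_det W M hdet]
      have hs : ((2 : ℂ) * (Complex.I * t)) ≠ 0 := mul_ne_zero two_ne_zero hc
      have e2 : ((2 : ℂ) * (Complex.I * t)) • (Tᴴ ⊗ₖ E1 - T ⊗ₖ E2)
          = (((2 : ℂ) * (Complex.I * t)) • (1 : Matrix (Fin N × Fin 2) (Fin N × Fin 2) ℂ))
            * (Tᴴ ⊗ₖ E1 - T ⊗ₖ E2) := by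
        rw [Matrix.smul_mul, one_mul]
      rw [← e1, hWMW, e2, Matrix.rank_mul_eq_right_of_isUnit_det]
      rw [Matrix.det_smul, Matrix.det_one, mul_one]
      exact (pow_ne_zero _ hs).isUnit
    set d : Fin N × Fin 2 → ℂ := fun p =>
        (if 1 ≤ (p.1 : ℕ) then (1 : ℂ) else 0) * ![1, 0] p.2
        + (if (p.1 : ℕ) + 1 < N then (1 : ℂ) else 0) * ![0, 1] p.2 with hd
    have hKH : (Tᴴ ⊗ₖ E1 - T ⊗ₖ E2)ᴴ = T ⊗ₖ E1 - Tᴴ ⊗ₖ E2 := by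
      rw [Matrix.conjTranspose_sub, kron_conjT, kron_conjT, hE1H, hE2H,
        Matrix.conjTranspose_conjTranspose]
    have hKK : (Tᴴ ⊗ₖ E1 - T ⊗ₖ E2) * (Tᴴ ⊗ₖ E1 - T ⊗ₖ E2)ᴴ
        = Matrix.diagonal d := by
      rw [hKH, sub_mul, mul_sub, mul_sub,
        ← Matrix.mul_kronecker_mul, ← Matrix.mul_kronecker_mul,
        ← Matrix.mul_kronecker_mul, ← Matrix.mul_kronecker_mul,
        hE11, hE12, hE21, hE22, Matrix.kronecker_zero, Matrix.kronecker_zero,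
        sub_zero, zero_sub, sub_neg_eq_add, hTcT T hT, hTTc T hT, hE1d, hE2d,
        Matrix.diagonal_kronecker_diagonal, Matrix.diagonal_kronecker_diagonal,
        Matrix.diagonal_add, hd]
    have hr3 : (Tᴴ ⊗ₖ E1 - T ⊗ₖ E2).rank
        = Fintype.card {p : Fin N × Fin 2 // d p ≠ 0} := by
      rw [← Matrix.rank_self_mul_conjTranspose, hKK, Matrix.rank_diagonal]
    have hiff : ∀ p : Fin N × Fin 2, d p = 0 ↔
        (p = (⟨0, hN⟩, 0) ∨ p = (⟨N - 1, by omega⟩, 1)) := by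
      rintro ⟨i, a⟩
      fin_cases a <;>
        simp [hd, Prod.ext_iff, Fin.ext_iff] <;>
        (try split_ifs) <;> (try simp) <;> omega
    have hcard2 : Fintype.card {p : Fin N × Fin 2 // d p = 0} = 2 := by
      rw [Fintype.card_subtype]
      have hfil : Finset.univ.filter (fun p : Fin N × Fin 2 => d p = 0)
          = {((⟨0, hN⟩ : Fin N), (0 : Fin 2)), ((⟨N - 1, by omega⟩ : Fin N), (1 : Fin 2))} := by
        ext p
        simp [hiff p]
      rw [hfil, Finset.card_insert_of_notMem, Finset.card_singleton]
      simp [Prod.ext_iff]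
    have h1 := Fintype.card_subtype_compl (fun p : Fin N × Fin 2 => d p = 0)
    rw [hcard2, Fintype.card_prod, Fintype.card_fin, Fintype.card_fin] at h1
    rw [hr1, hr3]
    exact h1.trans (by omega)
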